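/- Let q be a prime power and let K be a finite field with q² elements containing a subfield F with q elements. For every β ∈ K \ F, the product over all α ∈ K \ F with α ≠ β of (β - α) equals -1/(β^q - β). -/

import Mathlib

open Polynomial Finset

theorem stmt4 (q : ℕ) (hq : IsPrimePow q) (K : Type*) [Field K] [Fintype K]
    [DecidableEq K] (hK : Fintype.card K = q ^ 2) (β : K) (hβ : β ^ q ≠ β) :
    ∏ α ∈ (Finset.univ.filter (fun α : K => α ^ q ≠ α)).erase β, (β - α)
      = -1 / (β ^ q - β) := by
  classical
  have h1q : 1 < q := hq.two_le
  set S : Finset K := univ.filter (fun a : K => a ^ q = a) with hSdef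
  set p : K[X] := X ^ q - X with hpdef
  have hpne : p ≠ 0 := FiniteField.X_pow_card_sub_X_ne_zero K h1q
  have hpdeg : p.natDegree = q := FiniteField.X_pow_card_sub_X_natDegree_eq K h1q
  have hmon : p.Monic := monic_X_pow_sub (by rw [degree_X]; exact_mod_cast h1q)
  -- the big polynomial
  set P : K[X] := X ^ q ^ 2 - X with hPdef
  have h1q2 : 1 < q ^ 2 := Nat.one_lt_pow (by norm_num) h1q
  have hPne : P ≠ 0 := FiniteField.X_pow_card_sub_X_ne_zero K h1q2
  have hProots : P.roots = Finset.univ.val := by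
    rw [hPdef, ← hK]
    exact FiniteField.roots_X_pow_card_sub_X K
  have hPsplits : P.Splits := by
    rw [splits_iff_card_roots, hProots, FiniteField.X_pow_card_sub_X_natDegree_eq K h1q2]
    rw [← Finset.card_def, Finset.card_univ, hK]
  have hdvd : p ∣ P := by
    have h1 : p ∣ (X ^ q) ^ q - X ^ q := sub_dvd_pow_sub_pow _ _ q
    have h2 : P = ((X ^ q) ^ q - X ^ q) + (X ^ q - X) := by
      rw [hPdef, ← pow_mul, ← sq]; ring
    rw [h2]
    exact dvd_add h1 dvd_rfl
  have hpsplits : p.Splits := hPsplits.of_dvd hPne hdvd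
  have hPsep : P.Separable := by
    rw [← nodup_roots_iff_of_splits hPne hPsplits, hProots]
    exact Finset.univ.nodup
  have hpsep : p.Separable := hPsep.of_dvd hdvd
  have hnodup : p.roots.Nodup := nodup_roots hpsep
  have hrootsS : p.roots.toFinset = S := by
    ext a
    simp only [Multiset.mem_toFinset, mem_roots hpne]
    simp only [IsRoot.def, hpdef, eval_sub, eval_pow,
      eval_X, sub_eq_zero, hSdef, mem_filter, mem_univ, true_and]
  -- product over S
  have hprodS : ∏ a ∈ S, (β - a) = β ^ q - β := by
    have heq := hpsplits.eq_prod_roots_of_monic hmon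
    have : eval β p = (p.roots.map fun a => β - a).prod := by
      conv_lhs => rw [heq]
      rw [eval_multiset_prod, Multiset.map_map]
      congr 1
      simp [Function.comp]
    rw [hpdef] at this
    simp only [eval_sub, eval_pow, eval_X] at this
    rw [this, ← hrootsS, Finset.prod]
    rw [Multiset.toFinset_val, Multiset.dedup_eq_self.mpr hnodup]
  -- product over all nonzero differences is -1
  have hunits : ∏ x : Kˣ, (x : K) = -1 := by
    have := congrArg (Units.coeHom K) (FiniteField.prod_univ_units_id_eq_neg_one (K := K))
    simpa using this
  have hnonzero : ∏ y ∈ univ.erase (0 : K), y = -1 := by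
    rw [← hunits]
    refine (Finset.prod_bij (fun (x : Kˣ) _ => (x : K)) ?_ ?_ ?_ ?_).symm
    · intro x _; exact mem_erase.mpr ⟨x.ne_zero, mem_univ _⟩
    · intro a _ b _ h; exact Units.ext h
    · intro y hy
      exact ⟨Units.mk0 y (mem_erase.mp hy).1, mem_univ _, rfl⟩
    · intro x _; rfl
  have hall : ∏ α ∈ univ.erase β, (β - α) = -1 := by
    rw [← hnonzero]
    refine Finset.prod_nbij' (fun α => β - α) (fun y => β - y) ?_ ?_ ?_ ?_ ?_
    · intro a ha
      exact mem_erase.mpr ⟨sub_ne_zero.mpr (Ne.symm (mem_erase.mp ha).1), mem_univ _⟩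
    · intro y hy
      refine mem_erase.mpr ⟨fun h => (mem_erase.mp hy).1 (sub_eq_self.mp h), mem_univ _⟩
    · intro a _; ring
    · intro a _; ring
    · intro a _; rfl
  -- split univ.erase β into S and the rest
  have hβS : β ∉ S := by simp [hSdef, hβ]
  have hsub : S ⊆ univ.erase β := fun a ha =>
    mem_erase.mpr ⟨fun h => hβS (h ▸ ha), mem_univ _⟩
  have hsdiff : univ.erase β \ S = (univ.filter (fun α : K => α ^ q ≠ α)).erase β := by
    ext a
    simp only [mem_sdiff, mem_erase, mem_univ, true_and, and_true, hSdef, mem_filter]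
  have hkey := Finset.prod_sdiff (f := fun α => β - α) hsub
  rw [hall, hsdiff, hprodS] at hkey
  have hne : β ^ q - β ≠ 0 := sub_ne_zero.mpr hβ
  rw [eq_div_iff hne]
  exact hkey
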